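/- Let A and B be finite non-empty subsets of ℤ with min B = 0, max B = m > 0 and |A| ≥ |B| - 1. Then the average over b ∈ B \ {m} of |A + {0, b, m}| is at least |A| + |B| - 1. -/

import Mathlib

open Finset Pointwise

/-- Escape lemma: starting from any integer, adding enough multiples of `m > 0`
leaves the finite set `A`. -/
lemma stmt4_exists_escape (A : Finset ℤ) (hA : A.Nonempty) (m : ℤ) (hm : 0 < m) (d : ℤ) :
    ∃ j : ℕ, d + (j : ℤ) * m ∉ A := by
  refine ⟨(A.max' hA + 1 - d).toNat, fun hmem => ?_⟩
  have h1 := A.le_max' _ hmem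
  have h2 : (((A.max' hA + 1 - d).toNat : ℤ)) ≥ A.max' hA + 1 - d := Int.self_le_toNat _
  have h3 : (0 : ℤ) ≤ ((A.max' hA + 1 - d).toNat : ℤ) := Int.ofNat_nonneg _
  have h4 : ((A.max' hA + 1 - d).toNat : ℤ) * 1 ≤ ((A.max' hA + 1 - d).toNat : ℤ) * m :=
    mul_le_mul_of_nonneg_left hm h3
  linarith

/-- Key counting bound: for fixed `a`, the number of `b ∈ B'` with
`a + b ∈ A ∪ (A + m)` is at most the number of "chain tops" `|(A+m) \ A|`. -/
lemma stmt4_fiber_bound (A : Finset ℤ) (hA : A.Nonempty) (m : ℤ) (hm : 0 < m)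
    (B' : Finset ℤ) (hB' : ∀ b ∈ B', 0 ≤ b ∧ b < m) (a : ℤ) :
    (B'.filter (fun b => a + b ∈ A ∪ A.image (· + m))).card
      ≤ (A.image (· + m) \ A).card := by
  classical
  have hesc := stmt4_exists_escape A hA m hm
  set k : ℤ → ℕ := fun d => Nat.find (hesc d) with hk
  set e : ℤ → ℤ := fun d => d + (k d : ℤ) * m with he
  have he1 : ∀ d, e d ∉ A := fun d => Nat.find_spec (hesc d)
  have he2 : ∀ d ∈ A ∪ A.image (· + m), e d ∈ A.image (· + m) := by
    intro d hd
    rcases Nat.eq_zero_or_pos (k d) with h0 | hpos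
    · have hed : e d = d := by simp [he, h0]
      have hdA : d ∉ A := by rw [← hed]; exact he1 d
      rw [hed]
      rcases Finset.mem_union.1 hd with h | h
      · exact absurd h hdA
      · exact h
    · obtain ⟨j, hj⟩ : ∃ j, k d = j + 1 := ⟨k d - 1, (Nat.succ_pred_eq_of_pos hpos).symm⟩
      have hjA : d + (j : ℤ) * m ∈ A := by
        by_contra hc
        have := Nat.find_min (hesc d) (show j < k d by omega) hc
        exact this
      refine Finset.mem_image.2 ⟨d + (j : ℤ) * m, hjA, ?_⟩
      simp only [he, hj]
      push_cast
      ring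
  apply Finset.card_le_card_of_injOn (fun b => e (a + b))
  · intro b hb
    simp only [Finset.mem_coe, Finset.mem_filter] at hb
    exact Finset.mem_sdiff.2 ⟨he2 _ hb.2, he1 _⟩
  · intro b₁ h₁ b₂ h₂ heq
    simp only [Finset.coe_filter, Set.mem_setOf_eq] at h₁ h₂
    have hb₁ := hB' b₁ h₁.1
    have hb₂ := hB' b₂ h₂.1
    have hdiff : b₁ - b₂ = ((k (a + b₂) : ℤ) - (k (a + b₁) : ℤ)) * m := by
      have : (a + b₁) + (k (a + b₁) : ℤ) * m = (a + b₂) + (k (a + b₂) : ℤ) * m := heq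
      linarith [this]
    set c : ℤ := (k (a + b₂) : ℤ) - (k (a + b₁) : ℤ) with hc
    have h5 : c * m < 1 * m := by rw [← hdiff, one_mul]; linarith [hb₁.1, hb₁.2, hb₂.1, hb₂.2]
    have h6 : (-1 : ℤ) * m < c * m := by rw [← hdiff]; linarith [hb₁.1, hb₁.2, hb₂.1, hb₂.2]
    have hc1 : c < 1 := lt_of_mul_lt_mul_right h5 (le_of_lt hm)
    have hc2 : -1 < c := lt_of_mul_lt_mul_right h6 (le_of_lt hm)
    have hc0 : c = 0 := by omega
    have : b₁ - b₂ = 0 := by rw [hdiff, hc0, zero_mul]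
    linarith

theorem stmt_4 (A B : Finset ℤ) (hA : A.Nonempty) (hB : B.Nonempty) (m : ℕ) (hm : 0 < m)
    (hmin : B.min' hB = 0) (hmax : B.max' hB = (m : ℤ))
    (hcard : B.card - 1 ≤ A.card) :
    (A.card : ℝ) + B.card - 1
      ≤ (∑ b ∈ B.erase (m : ℤ),
          ((A + ({0, b, (m : ℤ)} : Finset ℤ)).card : ℝ)) / (B.erase (m : ℤ)).card := by
  classical
  have hmZ : (0 : ℤ) < (m : ℤ) := by exact_mod_cast hm
  have hmB : (m : ℤ) ∈ B := hmax ▸ B.max'_mem hB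
  have h0B : (0 : ℤ) ∈ B := hmin ▸ B.min'_mem hB
  set N := A.card with hN
  set B' := B.erase (m : ℤ) with hB'def
  have h0B' : (0 : ℤ) ∈ B' := Finset.mem_erase.2 ⟨by omega, h0B⟩
  set n := B'.card with hn
  have hn1 : 1 ≤ n := Finset.card_pos.2 ⟨0, h0B'⟩
  have hBpos : 1 ≤ B.card := Finset.card_pos.2 hB
  have hBcard : B.card = n + 1 := by
    have h := Finset.card_erase_of_mem hmB
    rw [← hB'def] at h
    omega
  have hbrange : ∀ b ∈ B', 0 ≤ b ∧ b < (m : ℤ) := by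
    intro b hb
    have hbB := Finset.mem_of_mem_erase hb
    have hne := (Finset.mem_erase.1 hb).1
    constructor
    · have := B.min'_le b hbB; rw [hmin] at this; exact this
    · have := B.le_max' b hbB; rw [hmax] at this; exact lt_of_le_of_ne this hne
  have hNn : n ≤ N := by omega
  set D := A ∪ A.image (· + (m : ℤ)) with hD
  set s := (A.image (· + (m : ℤ)) \ A).card with hs
  have hDcard : D.card = N + s := by
    rw [hD, Finset.union_comm, ← Finset.card_sdiff_add_card]
    omega
  have hterm : ∀ b : ℤ, A + ({0, b, (m : ℤ)} : Finset ℤ) = D ∪ A.image (· + b) := by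
    intro b
    ext x
    simp only [Finset.mem_add, Finset.mem_insert, Finset.mem_singleton, hD,
      Finset.mem_union, Finset.mem_image]
    constructor
    · rintro ⟨y, hy, z, hz, rfl⟩
      rcases hz with rfl | rfl | rfl
      · exact Or.inl (Or.inl (by simpa using hy))
      · exact Or.inr ⟨y, hy, rfl⟩
      · exact Or.inl (Or.inr ⟨y, hy, rfl⟩)
    · rintro ((h | ⟨a, ha, rfl⟩) | ⟨a, ha, rfl⟩)
      · exact ⟨x, h, 0, Or.inl rfl, add_zero x⟩
      · exact ⟨a, ha, (m : ℤ), Or.inr (Or.inr rfl), rfl⟩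
      · exact ⟨a, ha, b, Or.inr (Or.inl rfl), rfl⟩
  have key : n * (N + n) ≤ ∑ b ∈ B', (A + ({0, b, (m : ℤ)} : Finset ℤ)).card := by
    rcases le_or_gt n s with hcase | hcase
    · calc n * (N + n) = ∑ _b ∈ B', (N + n) := by rw [Finset.sum_const, smul_eq_mul]
        _ ≤ ∑ b ∈ B', (A + ({0, b, (m : ℤ)} : Finset ℤ)).card := by
            apply Finset.sum_le_sum
            intro b hb
            rw [hterm b]
            calc N + n ≤ N + s := by omega
              _ = D.card := hDcard.symm
              _ ≤ (D ∪ A.image (· + b)).card :=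
                  Finset.card_le_card Finset.subset_union_left
    · have hsum_eq : ∀ b ∈ B',
          (A + ({0, b, (m : ℤ)} : Finset ℤ)).card + (D ∩ A.image (· + b)).card
            = 2 * N + s := by
        intro b _
        rw [hterm b, Finset.card_union_add_card_inter, hDcard,
          Finset.card_image_of_injective _ (add_left_injective b)]
        omega
      have hinter : ∑ b ∈ B', (D ∩ A.image (· + b)).card ≤ N * s := by
        have h1 : ∀ b : ℤ, D ∩ A.image (· + b)
            = (A.filter (fun a => a + b ∈ D)).image (· + b) := by
          intro b
          ext x
          simp only [Finset.mem_inter, Finset.mem_image, Finset.mem_filter]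
          constructor
          · rintro ⟨hxD, a, ha, rfl⟩
            exact ⟨a, ⟨ha, hxD⟩, rfl⟩
          · rintro ⟨a, ⟨ha, hD'⟩, rfl⟩
            exact ⟨hD', a, ha, rfl⟩
        calc ∑ b ∈ B', (D ∩ A.image (· + b)).card
            = ∑ b ∈ B', (A.filter (fun a => a + b ∈ D)).card := by
              refine Finset.sum_congr rfl fun b _ => ?_
              rw [h1 b, Finset.card_image_of_injective _ (add_left_injective b)]
          _ = ∑ b ∈ B', ∑ a ∈ A, if a + b ∈ D then 1 else 0 := by
              refine Finset.sum_congr rfl fun b _ => ?_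
              exact Finset.card_filter _ _
          _ = ∑ a ∈ A, ∑ b ∈ B', if a + b ∈ D then 1 else 0 := Finset.sum_comm
          _ = ∑ a ∈ A, (B'.filter (fun b => a + b ∈ D)).card := by
              refine Finset.sum_congr rfl fun a _ => ?_
              exact (Finset.card_filter _ _).symm
          _ ≤ ∑ _a ∈ A, s := by
              apply Finset.sum_le_sum
              intro a _
              exact stmt4_fiber_bound A hA (m : ℤ) hmZ B' hbrange a
          _ = N * s := by rw [Finset.sum_const, smul_eq_mul]
      have hsum : (∑ b ∈ B', (A + ({0, b, (m : ℤ)} : Finset ℤ)).card)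
          + ∑ b ∈ B', (D ∩ A.image (· + b)).card = n * (2 * N + s) := by
        rw [← Finset.sum_add_distrib, Finset.sum_congr rfl hsum_eq, Finset.sum_const,
          smul_eq_mul]
      obtain ⟨x, hx⟩ := Nat.exists_eq_add_of_le hNn
      obtain ⟨y, hy⟩ := Nat.exists_eq_add_of_le (le_of_lt hcase)
      nlinarith [hsum, hinter]
  have hnR : (0 : ℝ) < ((B.erase (m : ℤ)).card : ℝ) := by
    rw [← hB'def, ← hn]
    exact_mod_cast hn1
  rw [le_div_iff₀ hnR]
  have hkeyR : ((n * (N + n) : ℕ) : ℝ)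
      ≤ ((∑ b ∈ B', (A + ({0, b, (m : ℤ)} : Finset ℤ)).card : ℕ) : ℝ) := by
    exact_mod_cast key
  push_cast at hkeyR
  rw [← hB'def]
  have hBc : (B.card : ℝ) = (n : ℝ) + 1 := by exact_mod_cast hBcard
  rw [hBc, ← hn]
  nlinarith [hkeyR]
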